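/- For every E ∈ Σ_II there exists γ = γ(E) > 0 such that, with θ ∈ (−π/2, π/2) the unique angle satisfying sin θ = (E²−λ²)/(2E): |t_{2n−1}(E)|·e^{−2^nγ} → 1/2, |t_{2n}(E)|·e^{2^nγ} → 2, |μ_n(E)|·e^{−2^nγ} → 1/2, |ν_n(E)|·e^{−2^nγ} → sec(θ)/√2, and |ω_n(E)|·e^{−2^nγ} → |tan(θ)|/√2, as n → ∞. -/

import Mathlib

noncomputable section

open Filter Topology

namespace TMH

/-- the pair `(A_n(E), B_n(E))`:  `A_0 = [[E−λ,−1],[1,0]]`, `B_0 = [[E+λ,−1],[1,0]]`,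
`A_{n+1} = B_n A_n`, `B_{n+1} = A_n B_n`. -/
def AB (lam E : ℝ) : ℕ → Matrix (Fin 2) (Fin 2) ℝ × Matrix (Fin 2) (Fin 2) ℝ
  | 0 => (!![E - lam, -1; 1, 0], !![E + lam, -1; 1, 0])
  | n + 1 => ((AB lam E n).2 * (AB lam E n).1, (AB lam E n).1 * (AB lam E n).2)

def A (lam E : ℝ) (n : ℕ) : Matrix (Fin 2) (Fin 2) ℝ := (AB lam E n).1
def B (lam E : ℝ) (n : ℕ) : Matrix (Fin 2) (Fin 2) ℝ := (AB lam E n).2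

/-- the trace polynomials `t_n(E) = tr(A_n(E))` -/
def t (lam E : ℝ) (n : ℕ) : ℝ := (A lam E n).trace

/-- the set `Σ_I` of type-I energies -/
def SigmaI (lam : ℝ) : Set ℝ := {E | ∃ k : ℕ, 1 ≤ k ∧ t lam E k = 0}

/-- the set `Σ_II` of type-II energies -/
def SigmaII (lam : ℝ) : Set ℝ :=
  {E | ∃ n₀ : ℕ, ∀ n : ℕ, n₀ ≤ n → |t lam E (2 * n)| ≤ 2 ∧ 2 < |t lam E (2 * n + 1)|}

/-- the set `Σ_III` of type-III energies -/
def SigmaIII (lam : ℝ) : Set ℝ :=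
  {E | ∃ n₀ : ℕ, ∀ n : ℕ, n₀ ≤ n → |t lam E (2 * n + 1)| ≤ 2 ∧ 2 < |t lam E (2 * n)|}

end TMH
namespace TMH

def U : Matrix (Fin 2) (Fin 2) ℝ := !![0, 1; 1, 0]
def V : Matrix (Fin 2) (Fin 2) ℝ := !![1, 0; 0, -1]
def W : Matrix (Fin 2) (Fin 2) ℝ := !![0, -1; 1, 0]

end TMH
namespace TMH

lemma A_succ (lam E : ℝ) (n : ℕ) : A lam E (n+1) = B lam E n * A lam E n := rfl
lemma B_succ (lam E : ℝ) (n : ℕ) : B lam E (n+1) = A lam E n * B lam E n := rfl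

def p (lam E : ℝ) (k : ℕ) : ℝ := A lam E (2*k+1) 0 0
def q (lam E : ℝ) (k : ℕ) : ℝ := A lam E (2*k+1) 0 1
def r (lam E : ℝ) (k : ℕ) : ℝ := A lam E (2*k+1) 1 0
def s (lam E : ℝ) (k : ℕ) : ℝ := A lam E (2*k+1) 1 1

lemma etaA (lam E : ℝ) (k : ℕ) :
    A lam E (2*k+1) = !![p lam E k, q lam E k; r lam E k, s lam E k] :=
  Matrix.eta_fin_two _

example (p q r s : ℝ) :
    (!![p,q;r,s] * !![p,-r;-q,s]) * (!![p,-r;-q,s] * !![p,q;r,s]) =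
      !![p^4 - p^2*q^2 + p^2*q*r - p^2*r^2 - p*q^2*s - p*r^2*s + q^2*r^2 + q*r*s^2,
         p^3*q - p^2*r*s - p*q^3 + p*q^2*r - p*r*s^2 - q^3*s + q^2*r*s + q*s^3;
         p^3*r - p^2*q*s + p*q*r^2 - p*q*s^2 - p*r^3 + q*r^2*s - r^3*s + r*s^3,
         p^2*q*r - p*q^2*s - p*r^2*s + q^2*r^2 - q^2*s^2 + q*r*s^2 - r^2*s^2 + s^4] := by
  ext i j
  fin_cases i <;> fin_cases j <;>
    simp [Matrix.mul_apply, Fin.sum_univ_two] <;> ring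

-- auto-generated algebra layer
namespace Step
variable (p q r s : ℝ)
def P : ℝ := (p^4 - p^2*q^2 + p^2*q*r - p^2*r^2 - p*q^2*s - p*r^2*s + q^2*r^2 + q*r*s^2)
def Q : ℝ := (p^3*q - p^2*r*s - p*q^3 + p*q^2*r - p*r*s^2 - q^3*s + q^2*r*s + q*s^3)
def R : ℝ := (p^3*r - p^2*q*s + p*q*r^2 - p*q*s^2 - p*r^3 + q*r^2*s - r^3*s + r*s^3)
def S : ℝ := (p^2*q*r - p*q^2*s - p*r^2*s + q^2*r^2 - q^2*s^2 + q*r*s^2 - r^2*s^2 + s^4)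

lemma stepA : (!![p,q;r,s] * !![p,-r;-q,s]) * (!![p,-r;-q,s] * !![p,q;r,s]) =
    !![P p q r s, Q p q r s; R p q r s, S p q r s] := by
  ext i j
  fin_cases i <;> fin_cases j <;>
    simp [P, Q, R, S, Matrix.mul_apply, Fin.sum_univ_two] <;> ring

lemma stepB : (!![p,-r;-q,s] * !![p,q;r,s]) * (!![p,q;r,s] * !![p,-r;-q,s]) =
    !![P p q r s, -(R p q r s); -(Q p q r s), S p q r s] := by
  ext i j
  fin_cases i <;> fin_cases j <;>
    simp [P, Q, R, S, Matrix.mul_apply, Fin.sum_univ_two] <;> ring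

lemma detStep (hdet : p*s - q*r = 1) :
    P p q r s * S p q r s - Q p q r s * R p q r s = 1 := by
  simp only [P, Q, R, S]
  linear_combination (p^3*s^3 - 3*p^2*q*r*s^2 + p^2*s^2 + 3*p*q^2*r^2*s - 2*p*q*r*s + p*s - q^3*r^3 + q^2*r^2 - q*r + 1) * hdet

lemma S1step (hdet : p*s - q*r = 1) :
    P p q r s + S p q r s = (p+s)^2 * ((p^2 - r^2 + s^2 - q^2) - 2) + 2 := by
  simp only [P, S]
  linear_combination (-2*p^2 - 2*p*s - 2*q*r - 2*s^2 + 2) * hdet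

lemma S2step (hdet : p*s - q*r = 1) :
    P p q r s^2 - R p q r s^2 + S p q r s^2 - Q p q r s^2 =
      (p^2 - r^2 + s^2 - q^2)^2 * ((P p q r s + S p q r s) - 2) + 2 := by
  simp only [P, Q, R, S]
  linear_combination (-2*p^5*s + 2*p^4*q*r - 2*p^4 + 4*p^3*q^2*s + 4*p^3*r^2*s - 2*p^3*s^3 - 4*p^2*q^3*r + 4*p^2*q^2 - 4*p^2*q*r^3 - 2*p^2*q*r*s^2 + 4*p^2*r^2 - 2*p^2*s^2 - 2*p*q^4*s + 2*p*q^2*r^2*s + 4*p*q^2*s^3 - 4*p*q*r*s - 2*p*r^4*s + 4*p*r^2*s^3 - 2*p*s^5 + 2*p*s + 2*q^5*r - 2*q^4 + 2*q^3*r^3 - 4*q^3*r*s^2 - 2*q^2*r^2 + 4*q^2*s^2 + 2*q*r^5 - 4*q*r^3*s^2 + 2*q*r*s^4 - 2*q*r - 2*r^4 + 4*r^2*s^2 - 2*s^4 + 2) * hdet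

lemma FGstep :
    (Q p q r s - R p q r s = (p+s) * (p^2 - r^2 + s^2 - q^2) * (q - r)) ∧
    (P p q r s - S p q r s = (p+s) * (p^2 - r^2 + s^2 - q^2) * (p - s)) := by
  constructor <;> (simp only [P, Q, R, S]; ring)

end Step



lemma A_two (lam E : ℝ) (n : ℕ) :
    A lam E (n+1+1) = (A lam E n * B lam E n) * (B lam E n * A lam E n) := by
  rw [A_succ lam E (n+1), B_succ lam E n, A_succ lam E n]

lemma B_two (lam E : ℝ) (n : ℕ) :
    B lam E (n+1+1) = (B lam E n * A lam E n) * (A lam E n * B lam E n) := by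
  rw [B_succ lam E (n+1), A_succ lam E n, B_succ lam E n]


lemma structB (lam E : ℝ) : ∀ k : ℕ,
    B lam E (2*k+1) = !![p lam E k, -(r lam E k); -(q lam E k), s lam E k] ∧
    p lam E k * s lam E k - q lam E k * r lam E k = 1 ∧
    (p lam E k - s lam E k) * (2*E) + (q lam E k - r lam E k) * (E^2 - lam^2) = 0 := by
  intro k
  induction k with
  | zero =>
    have hA1 : A lam E 1 = !![(E+lam)*(E-lam) - 1, -(E+lam); E - lam, -1] := by
      show (!![E + lam, -1; 1, 0] * !![E - lam, -1; 1, 0] : Matrix (Fin 2) (Fin 2) ℝ) = _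
      ext i j
      fin_cases i <;> fin_cases j <;>
        simp [Matrix.mul_apply, Fin.sum_univ_two] <;> ring
    have hB1 : B lam E 1 = !![(E+lam)*(E-lam) - 1, -(E - lam); E + lam, -1] := by
      show (!![E - lam, -1; 1, 0] * !![E + lam, -1; 1, 0] : Matrix (Fin 2) (Fin 2) ℝ) = _
      ext i j
      fin_cases i <;> fin_cases j <;>
        simp [Matrix.mul_apply, Fin.sum_univ_two] <;> ring
    have hp : p lam E 0 = (E+lam)*(E-lam) - 1 := by
      rw [p, show 2*0+1 = 1 from rfl, hA1]; simp
    have hq : q lam E 0 = -(E+lam) := by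
      rw [q, show 2*0+1 = 1 from rfl, hA1]; simp
    have hr : r lam E 0 = E - lam := by
      rw [r, show 2*0+1 = 1 from rfl, hA1]; simp
    have hs : s lam E 0 = -1 := by
      rw [s, show 2*0+1 = 1 from rfl, hA1]; simp
    refine ⟨?_, ?_, ?_⟩
    · rw [show 2*0+1 = 1 from rfl, hB1, hp, hq, hr, hs]
      ext i j
      fin_cases i <;> fin_cases j <;> norm_num
    · rw [hp, hq, hr, hs]; ring
    · rw [hp, hq, hr, hs]; ring
  | succ k ih =>
    obtain ⟨hB, hdet, hlin⟩ := ih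
    have hA := etaA lam E k
    have e3 : 2*(k+1)+1 = (2*k+1) + 1 + 1 := by omega
    have hA3 : A lam E (2*(k+1)+1) =
        (A lam E (2*k+1) * B lam E (2*k+1)) * (B lam E (2*k+1) * A lam E (2*k+1)) := by
      rw [e3, A_two]
    have hB3 : B lam E (2*(k+1)+1) =
        (B lam E (2*k+1) * A lam E (2*k+1)) * (A lam E (2*k+1) * B lam E (2*k+1)) := by
      rw [e3, B_two]
    rw [hA, hB] at hA3 hB3
    rw [Step.stepA] at hA3
    rw [Step.stepB] at hB3
    have hp : p lam E (k+1) = Step.P (p lam E k) (q lam E k) (r lam E k) (s lam E k) := by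
      rw [p, hA3]; simp
    have hq : q lam E (k+1) = Step.Q (p lam E k) (q lam E k) (r lam E k) (s lam E k) := by
      rw [q, hA3]; simp
    have hr : r lam E (k+1) = Step.R (p lam E k) (q lam E k) (r lam E k) (s lam E k) := by
      rw [r, hA3]; simp
    have hs : s lam E (k+1) = Step.S (p lam E k) (q lam E k) (r lam E k) (s lam E k) := by
      rw [s, hA3]; simp
    refine ⟨?_, ?_, ?_⟩
    · rw [hB3, hp, hq, hr, hs]
    · rw [hp, hq, hr, hs]; exact Step.detStep _ _ _ _ hdet
    · rw [hp, hq, hr, hs, (Step.FGstep _ _ _ _).1, (Step.FGstep _ _ _ _).2]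
      linear_combination ((p lam E k + s lam E k) *
        ((p lam E k)^2 - (r lam E k)^2 + (s lam E k)^2 - (q lam E k)^2)) * hlin

/-- `X k = t (2k+1)` -/
def X (lam E : ℝ) (k : ℕ) : ℝ := p lam E k + s lam E k
/-- `Y k = t (2k+2)` -/
def Y (lam E : ℝ) (k : ℕ) : ℝ :=
  (p lam E k)^2 - (r lam E k)^2 + (s lam E k)^2 - (q lam E k)^2

lemma t_odd (lam E : ℝ) (k : ℕ) : t lam E (2*k+1) = X lam E k := by
  rw [t, Matrix.trace_fin_two, X]; rfl

lemma even_A (lam E : ℝ) (k : ℕ) : A lam E (2*k+2) =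
    !![(p lam E k)^2 - (r lam E k)^2, p lam E k * q lam E k - r lam E k * s lam E k;
       -(p lam E k * q lam E k) + r lam E k * s lam E k, (s lam E k)^2 - (q lam E k)^2] := by
  rw [show 2*k+2 = (2*k+1)+1 from rfl, A_succ, (structB lam E k).1, etaA lam E k]
  ext i j
  fin_cases i <;> fin_cases j <;>
    simp [Matrix.mul_apply, Fin.sum_univ_two] <;> ring

lemma even_B (lam E : ℝ) (k : ℕ) : B lam E (2*k+2) =
    !![(p lam E k)^2 - (q lam E k)^2, -(p lam E k * r lam E k) + q lam E k * s lam E k;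
       p lam E k * r lam E k - q lam E k * s lam E k, (s lam E k)^2 - (r lam E k)^2] := by
  rw [show 2*k+2 = (2*k+1)+1 from rfl, B_succ, (structB lam E k).1, etaA lam E k]
  ext i j
  fin_cases i <;> fin_cases j <;>
    simp [Matrix.mul_apply, Fin.sum_univ_two] <;> ring

lemma t_even (lam E : ℝ) (k : ℕ) : t lam E (2*k+2) = Y lam E k := by
  rw [t, Matrix.trace_fin_two, even_A, Y]; simp; ring

lemma pqrs_succ (lam E : ℝ) (k : ℕ) :
    p lam E (k+1) = Step.P (p lam E k) (q lam E k) (r lam E k) (s lam E k) ∧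
    q lam E (k+1) = Step.Q (p lam E k) (q lam E k) (r lam E k) (s lam E k) ∧
    r lam E (k+1) = Step.R (p lam E k) (q lam E k) (r lam E k) (s lam E k) ∧
    s lam E (k+1) = Step.S (p lam E k) (q lam E k) (r lam E k) (s lam E k) := by
  have hB := (structB lam E k).1
  have hA := etaA lam E k
  have e3 : 2*(k+1)+1 = (2*k+1) + 1 + 1 := by omega
  have hA3 : A lam E (2*(k+1)+1) =
      (A lam E (2*k+1) * B lam E (2*k+1)) * (B lam E (2*k+1) * A lam E (2*k+1)) := by
    rw [e3, A_two]
  rw [hA, hB, Step.stepA] at hA3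
  refine ⟨?_, ?_, ?_, ?_⟩ <;> [rw [p, hA3]; rw [q, hA3]; rw [r, hA3]; rw [s, hA3]] <;> simp

lemma X_succ (lam E : ℝ) (k : ℕ) :
    X lam E (k+1) = (X lam E k)^2 * (Y lam E k - 2) + 2 := by
  obtain ⟨hp, hq, hr, hs⟩ := pqrs_succ lam E k
  rw [X, hp, hs, X, Y]
  exact Step.S1step _ _ _ _ (structB lam E k).2.1

lemma Y_succ (lam E : ℝ) (k : ℕ) :
    Y lam E (k+1) = (Y lam E k)^2 * (X lam E (k+1) - 2) + 2 := by
  obtain ⟨hp, hq, hr, hs⟩ := pqrs_succ lam E k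
  rw [Y, X, hp, hq, hr, hs, Y]
  exact Step.S2step _ _ _ _ (structB lam E k).2.1

lemma F_succ (lam E : ℝ) (k : ℕ) :
    q lam E (k+1) - r lam E (k+1) = X lam E k * Y lam E k * (q lam E k - r lam E k) := by
  obtain ⟨hp, hq, hr, hs⟩ := pqrs_succ lam E k
  rw [hq, hr, X, Y, (Step.FGstep _ _ _ _).1]

lemma G_succ (lam E : ℝ) (k : ℕ) :
    p lam E (k+1) - s lam E (k+1) = X lam E k * Y lam E k * (p lam E k - s lam E k) := by
  obtain ⟨hp, hq, hr, hs⟩ := pqrs_succ lam E k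
  rw [hp, hs, X, Y, (Step.FGstep _ _ _ _).2]

lemma muSq (lam E : ℝ) (k : ℕ) :
    (q lam E k + r lam E k)^2 = (X lam E k)^2 - Y lam E k - 2 := by
  have hdet := (structB lam E k).2.1
  rw [X, Y]; linear_combination (-2 : ℝ) * hdet

lemma FGsq (lam E : ℝ) (k : ℕ) :
    (q lam E k - r lam E k)^2 - (p lam E k - s lam E k)^2 = 2 - Y lam E k := by
  have hdet := (structB lam E k).2.1
  rw [Y]; linear_combination (2 : ℝ) * hdet

lemma q0 (lam E : ℝ) : q lam E 0 - r lam E 0 = -(2*E) := by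
  have hA1 : A lam E 1 = !![(E+lam)*(E-lam) - 1, -(E+lam); E - lam, -1] := by
    show (!![E + lam, -1; 1, 0] * !![E - lam, -1; 1, 0] : Matrix (Fin 2) (Fin 2) ℝ) = _
    ext i j
    fin_cases i <;> fin_cases j <;>
      simp [Matrix.mul_apply, Fin.sum_univ_two] <;> ring
  have hq : q lam E 0 = -(E+lam) := by rw [q, show 2*0+1 = 1 from rfl, hA1]; simp
  have hr : r lam E 0 = E - lam := by rw [r, show 2*0+1 = 1 from rfl, hA1]; simp
  rw [hq, hr]; ring



open Real in
lemma core (x y : ℕ → ℝ)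
    (hx : ∀ k, x (k+1) = (x k)^2 * (y k - 2) + 2)
    (hy : ∀ k, y (k+1) = (y k)^2 * (x (k+1) - 2) + 2)
    (hxb : ∀ k, x k < -2) (hyb : ∀ k, |y k| ≤ 1) :
    ∃ g : ℝ, 0 < g ∧
      Tendsto (fun k => 2 * |x k| * Real.exp (-(2^k) * g)) atTop (nhds 1) ∧
      Tendsto (fun k => |x k|) atTop atTop ∧
      Tendsto y atTop (nhds 0) := by
  have habs : ∀ k, |x k| = -x k := fun k => abs_of_neg (by linarith [hxb k])
  have hstep : ∀ k, -x (k+1) = (x k)^2 * (2 - y k) - 2 := by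
    intro k; rw [hx k]; ring
  have hgrow : ∀ k, (x k)^2 - 2 ≤ -x (k+1) := by
    intro k
    have h1 := abs_le.1 (hyb k)
    rw [hstep]
    nlinarith [sq_nonneg (x k)]
  have hgeom : ∀ k, (-x 0 - 2) * 4^k ≤ -x k - 2 := by
    intro k
    induction k with
    | zero => simp
    | succ k ih =>
      have h1 := hxb k
      have h2 := hgrow k
      have h3 : (0:ℝ) < 4^k := by positivity
      calc (-x 0 - 2) * 4^(k+1) = ((-x 0 - 2) * 4^k) * 4 := by ring
        _ ≤ (-x k - 2) * 4 := by nlinarith [hxb 0]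
        _ ≤ -x (k+1) - 2 := by nlinarith
  have huTop : Tendsto (fun k => -x k) atTop atTop := by
    have h0 : (0:ℝ) < -x 0 - 2 := by linarith [hxb 0]
    have h4 : Tendsto (fun k : ℕ => (-x 0 - 2) * 4^k + 2) atTop atTop := by
      apply tendsto_atTop_add_const_right
      exact (tendsto_pow_atTop_atTop_of_one_lt (by norm_num : (1:ℝ) < 4)).const_mul_atTop h0
    exact tendsto_atTop_mono (fun k => by linarith [hgeom k]) h4
  have hXinf : Tendsto (fun k => |x k|) atTop atTop := by
    refine huTop.congr fun k => (habs k).symm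
  -- y → 0
  have hy2 : ∀ k, (y k)^2 * (2 - x (k+1)) ≤ 3 := by
    intro k
    have e : (y k)^2 * (2 - x (k+1)) = 2 - y (k+1) := by linear_combination hy k
    have := (abs_le.1 (hyb (k+1))).1
    linarith
  have hysq : ∀ k, (y k)^2 ≤ 3 / (-x (k+1)) := by
    intro k
    have hpos : (0:ℝ) < -x (k+1) := by linarith [hxb (k+1)]
    rw [le_div_iff₀ hpos]
    nlinarith [sq_nonneg (y k), hy2 k, hxb (k+1)]
  have huTop1 : Tendsto (fun k => -x (k+1)) atTop atTop :=
    (tendsto_add_atTop_iff_nat 1).2 huTop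
  have hb0 : Tendsto (fun k => Real.sqrt (3 / (-x (k+1)))) atTop (nhds 0) := by
    have h1 : Tendsto (fun k => 3 / (-x (k+1))) atTop (nhds 0) :=
      tendsto_const_nhds.div_atTop huTop1
    simpa using h1.sqrt
  have hy0 : Tendsto y atTop (nhds 0) := by
    have hb : ∀ k, |y k| ≤ Real.sqrt (3 / (-x (k+1))) := by
      intro k
      rw [← Real.sqrt_sq_eq_abs]
      exact Real.sqrt_le_sqrt (hysq k)
    have hlow : Tendsto (fun k => -Real.sqrt (3 / (-x (k+1)))) atTop (nhds 0) := by
      have := hb0.neg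
      rwa [neg_zero] at this
    refine tendsto_of_tendsto_of_tendsto_of_le_of_le hlow hb0 (fun k => ?_) (fun k => ?_)
    · linarith [(abs_le.1 (hb k)).1]
    · exact (abs_le.1 (hb k)).2
  -- the sequence c and the error terms
  obtain ⟨c, hc⟩ : ∃ c : ℕ → ℝ, c = fun k => 2 * (-x k) := ⟨_, rfl⟩
  have hc4 : ∀ k, 4 < c k := fun k => by rw [hc]; simp only; linarith [hxb k]
  have hcpos : ∀ k, 0 < c k := fun k => by linarith [hc4 k]
  have hcTop : Tendsto c atTop atTop := by
    rw [hc]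
    exact huTop.const_mul_atTop (by norm_num : (0:ℝ) < 2)
  obtain ⟨ε, hε⟩ : ∃ ε : ℕ → ℝ, ε = fun k => -(y k)/2 - 4/(c k)^2 := ⟨_, rfl⟩
  have hceq : ∀ k, c (k+1) = (c k)^2 * (1 + ε k) := by
    intro k
    have hne : (c k)^2 ≠ 0 := pow_ne_zero 2 (ne_of_gt (hcpos k))
    have hcc : (c k)^2 * (4/(c k)^2) = 4 := mul_div_cancel₀ _ hne
    have hc2 : (c k)^2 = 4*(x k)^2 := by
      rw [hc]; simp only; ring
    have hck1 : c (k+1) = 2*((x k)^2 * (2 - y k) - 2) := by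
      rw [hc]; simp only [hstep k]
    rw [hck1]
    simp only [hε]
    linear_combination hcc + (y k/2 - 1) * hc2
  have hεb : ∀ k, |ε k| ≤ 3/4 := by
    intro k
    have h1 := abs_le.1 (hyb k)
    have hp2 : (0:ℝ) < (c k)^2 := pow_pos (hcpos k) 2
    have h2 : 4/(c k)^2 ≤ 1/4 := by
      rw [div_le_iff₀ hp2]
      nlinarith [hc4 k]
    have h3 : 0 < 4/(c k)^2 := div_pos (by norm_num) hp2
    simp only [hε, abs_le]
    constructor <;> linarith
  have h1εpos : ∀ k, (1:ℝ)/4 ≤ 1 + ε k := fun k => by linarith [(abs_le.1 (hεb k)).1]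
  have hlog3 : ∀ k, |Real.log (1 + ε k)| ≤ 3 := by
    intro k
    have hpos : (0:ℝ) < 1 + ε k := by linarith [h1εpos k]
    have hup : Real.log (1 + ε k) ≤ 3/4 := by
      have := Real.log_le_sub_one_of_pos hpos
      have := (abs_le.1 (hεb k)).2
      linarith
    have hlow : -Real.log (1 + ε k) ≤ 3 := by
      have h4 : (1 + ε k)⁻¹ ≤ 4 := by
        rw [inv_eq_one_div, div_le_iff₀ hpos]
        linarith [h1εpos k]
      have := Real.log_le_sub_one_of_pos (inv_pos.2 hpos)
      rw [Real.log_inv] at this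
      linarith
    rw [abs_le]; constructor <;> linarith
  obtain ⟨d, hd⟩ : ∃ d : ℕ → ℝ, d = fun j => (1/2:ℝ)^(j+1) * Real.log (1 + ε j) := ⟨_, rfl⟩
  have hdnorm : ∀ j, ‖d j‖ ≤ 3 * (1/2:ℝ)^(j+1) := by
    intro j
    simp only [hd, norm_mul, Real.norm_eq_abs]
    rw [abs_of_nonneg (by positivity : (0:ℝ) ≤ (1/2:ℝ)^(j+1))]
    calc (1/2:ℝ)^(j+1) * |Real.log (1 + ε j)| ≤ (1/2:ℝ)^(j+1) * 3 := by
          exact mul_le_mul_of_nonneg_left (hlog3 j) (by positivity)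
      _ = 3 * (1/2:ℝ)^(j+1) := by ring
  have hgeo : Summable (fun j : ℕ => 3 * (1/2:ℝ)^(j+1)) := by
    have : Summable (fun j : ℕ => (3/2 : ℝ) * (1/2:ℝ)^j) := summable_geometric_two.mul_left _
    refine this.congr fun j => by rw [pow_succ]; ring
  have hdsum : Summable d := Summable.of_norm_bounded hgeo hdnorm
  -- tail bound helper
  have tailbound : ∀ (k : ℕ) (C : ℝ), 0 ≤ C → (∀ j, k ≤ j → |Real.log (1 + ε j)| ≤ C) →
      |∑' j, d (j + k)| ≤ C * (1/2:ℝ)^k := by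
    intro k C hC hj
    have hbd : ∀ j : ℕ, ‖d (j + k)‖ ≤ (C * (1/2:ℝ)^(k+1)) * (1/2:ℝ)^j := by
      intro j
      simp only [hd, norm_mul, Real.norm_eq_abs]
      rw [abs_of_nonneg (by positivity : (0:ℝ) ≤ (1/2:ℝ)^(j+k+1))]
      calc (1/2:ℝ)^(j+k+1) * |Real.log (1 + ε (j+k))| ≤ (1/2:ℝ)^(j+k+1) * C :=
            mul_le_mul_of_nonneg_left (hj _ (Nat.le_add_left _ _)) (by positivity)
        _ = (C * (1/2:ℝ)^(k+1)) * (1/2:ℝ)^j := by rw [pow_add, pow_add]; ring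
    have hgs : Summable (fun j : ℕ => (C * (1/2:ℝ)^(k+1)) * (1/2:ℝ)^j) :=
      summable_geometric_two.mul_left _
    have hsn : Summable (fun j : ℕ => ‖d (j + k)‖) :=
      Summable.of_nonneg_of_le (fun j => norm_nonneg _) hbd hgs
    calc |∑' j, d (j + k)| ≤ ∑' j, ‖d (j + k)‖ := norm_tsum_le_tsum_norm hsn
      _ ≤ ∑' j : ℕ, (C * (1/2:ℝ)^(k+1)) * (1/2:ℝ)^j := Summable.tsum_le_tsum hbd hsn hgs
      _ = (C * (1/2:ℝ)^(k+1)) * ∑' j : ℕ, (1/2:ℝ)^j := tsum_mul_left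
      _ = (C * (1/2:ℝ)^(k+1)) * 2 := by rw [tsum_geometric_two]
      _ = C * (1/2:ℝ)^k := by rw [pow_succ]; ring
  -- L and its limit
  obtain ⟨L, hL⟩ : ∃ L : ℕ → ℝ, L = fun k => (1/2:ℝ)^k * Real.log (c k) := ⟨_, rfl⟩
  have hLrec : ∀ k, L (k+1) = L k + d k := by
    intro k
    have hpos : (0:ℝ) < 1 + ε k := by linarith [h1εpos k]
    have hlogc : Real.log (c (k+1)) = 2 * Real.log (c k) + Real.log (1 + ε k) := by
      rw [hceq k, Real.log_mul (pow_ne_zero 2 (ne_of_gt (hcpos k))) (ne_of_gt hpos),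
        Real.log_pow]
      push_cast; ring
    simp only [hL, hd]
    rw [hlogc, pow_succ]
    ring
  have hLsum : ∀ k, L k = L 0 + ∑ j ∈ Finset.range k, d j := by
    intro k
    induction k with
    | zero => simp
    | succ k ih => rw [hLrec k, ih, Finset.sum_range_succ]; ring
  obtain ⟨g, hg⟩ : ∃ g : ℝ, g = L 0 + ∑' j, d j := ⟨_, rfl⟩
  have htail : ∀ k, g - L k = ∑' j, d (j + k) := by
    intro k
    have h := hdsum.sum_add_tsum_nat_add k
    rw [hg, hLsum k]
    linarith [h]
  -- g is positive
  have hgpos : 0 < g := by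
    obtain ⟨m, hm⟩ := (hcTop.eventually_gt_atTop 21).exists
    have hexp3 : Real.exp 3 < 21 := by
      have h := Real.exp_one_lt_d9
      have h3 : Real.exp 3 = (Real.exp 1)^3 := by
        rw [← Real.exp_nat_mul]; norm_num
      calc Real.exp 3 = (Real.exp 1)^3 := h3
        _ < 2.7182818286^3 := by
            exact pow_lt_pow_left₀ h (Real.exp_pos 1).le (by norm_num)
        _ < 21 := by norm_num
    have hlog : 3 < Real.log (c m) := by
      rw [Real.lt_log_iff_exp_lt (hcpos m)]
      linarith
    have htb := tailbound m 3 (by norm_num) (fun j _ => hlog3 j)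
    have habs2 : |g - L m| ≤ 3 * (1/2:ℝ)^m := by rw [htail m]; exact htb
    have h2 := (abs_le.1 habs2).1
    have hpm : (0:ℝ) < (1/2:ℝ)^m := by positivity
    have hLm : L m = (1/2:ℝ)^m * Real.log (c m) := by simp only [hL]
    nlinarith [mul_pos hpm (by linarith : (0:ℝ) < Real.log (c m) - 3)]
  -- the main convergence
  have hmain : Tendsto (fun k => Real.log (c k) - 2^k * g) atTop (nhds 0) := by
    have hε0 : Tendsto (fun j => Real.log (1 + ε j)) atTop (nhds 0) := by
      have hc2Top : Tendsto (fun j => (c j)^2) atTop atTop := by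
        refine tendsto_atTop_mono (fun j => ?_) hcTop
        nlinarith [hc4 j]
      have h4c : Tendsto (fun j => 4/(c j)^2) atTop (nhds 0) :=
        tendsto_const_nhds.div_atTop hc2Top
      have hεlim : Tendsto ε atTop (nhds 0) := by
        have h1 : Tendsto (fun j => -(y j)/2) atTop (nhds 0) := by
          simpa using (hy0.neg.div_const 2)
        rw [hε]
        simpa using h1.sub h4c
      have h1ε : Tendsto (fun j => 1 + ε j) atTop (nhds 1) := by
        simpa using tendsto_const_nhds.add hεlim
      have hcomp := (Real.continuousAt_log (by norm_num : (1:ℝ) ≠ 0)).tendsto.comp h1ε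
      simpa [Function.comp_def] using hcomp
    rw [Metric.tendsto_atTop] at hε0 ⊢
    intro δ hδ
    obtain ⟨K, hK⟩ := hε0 (δ/2) (by linarith)
    refine ⟨K, fun k hk => ?_⟩
    have htb : |∑' j, d (j + k)| ≤ (δ/2) * (1/2:ℝ)^k := by
      refine tailbound k (δ/2) (by linarith) (fun j hj => ?_)
      have := hK j (le_trans hk hj)
      rw [Real.dist_eq, sub_zero] at this
      linarith
    have habs2 : |g - L k| ≤ (δ/2) * (1/2:ℝ)^k := by rw [htail k]; exact htb
    rw [Real.dist_eq, sub_zero]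
    have hpowk : (2:ℝ)^k * (1/2:ℝ)^k = 1 := by
      rw [← mul_pow]; norm_num
    have h2pos : (0:ℝ) < (2:ℝ)^k := by positivity
    have hLk : Real.log (c k) = 2^k * L k := by
      simp only [hL]
      rw [← mul_assoc, hpowk, one_mul]
    calc |Real.log (c k) - 2^k * g| = 2^k * |g - L k| := by
          rw [hLk, ← mul_sub, abs_mul, abs_of_pos h2pos, abs_sub_comm]
      _ ≤ 2^k * ((δ/2) * (1/2:ℝ)^k) := mul_le_mul_of_nonneg_left habs2 (le_of_lt h2pos)
      _ = δ/2 * ((2:ℝ)^k * (1/2:ℝ)^k) := by ring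
      _ = δ/2 := by rw [hpowk, mul_one]
      _ < δ := by linarith
  refine ⟨g, hgpos, ?_, hXinf, hy0⟩
  have hfun : ∀ k, 2 * |x k| * Real.exp (-(2^k) * g) =
      Real.exp (Real.log (c k) + (-(2^k) * g)) := by
    intro k
    rw [Real.exp_add, Real.exp_log (hcpos k), habs k]
    simp only [hc]
  have hlim : Tendsto (fun k => Real.log (c k) + (-(2^k) * g)) atTop (nhds 0) := by
    refine hmain.congr fun k => by ring
  have hexp := (Real.continuous_exp.tendsto 0).comp hlim
  rw [Real.exp_zero] at hexp
  exact hexp.congr fun k => (hfun k).symm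


/-- **Theorem (exact asymptotics of `t_n`, `μ_n`, `ν_n`, `ω_n` at type-II energies).**
For `E ∈ Σ_II` there is `γ = γ(E) > 0` such that, with `θ ∈ (−π/2, π/2)` the unique
angle with `sin θ = (E²−λ²)/(2E)`:
`|t_{2n−1}|e^{−2ⁿγ} → 1/2`, `|t_{2n}|e^{2ⁿγ} → 2`, `|μ_n|e^{−2ⁿγ} → 1/2`,
`|ν_n|e^{−2ⁿγ} → sec θ/√2`, `|ω_n|e^{−2ⁿγ} → |tan θ|/√2`. -/
theorem typeII_asymptotics (lam : ℝ) (hlam : lam ≠ 0) (E : ℝ) (hE : E ∈ SigmaII lam)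
    (μ ν ω : ℕ → ℝ)
    (hμ : ∀ n : ℕ, 1 ≤ n → A lam E (2 * n - 1) - B lam E (2 * n - 1) = μ n • U)
    (hνω : ∀ n : ℕ, 1 ≤ n → A lam E (2 * n) - B lam E (2 * n) = ν n • V + ω n • W) :
    ∃ γ : ℝ, 0 < γ ∧
      ∀ θ : ℝ, θ ∈ Set.Ioo (-(Real.pi / 2)) (Real.pi / 2) →
        Real.sin θ = (E ^ 2 - lam ^ 2) / (2 * E) →
        Tendsto (fun n : ℕ => |t lam E (2 * n - 1)| * Real.exp (-(2 ^ n) * γ))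
          atTop (nhds (1 / 2)) ∧
        Tendsto (fun n : ℕ => |t lam E (2 * n)| * Real.exp ((2 ^ n) * γ))
          atTop (nhds 2) ∧
        Tendsto (fun n : ℕ => |μ n| * Real.exp (-(2 ^ n) * γ)) atTop (nhds (1 / 2)) ∧
        Tendsto (fun n : ℕ => |ν n| * Real.exp (-(2 ^ n) * γ)) atTop
          (nhds ((Real.cos θ)⁻¹ / Real.sqrt 2)) ∧
        Tendsto (fun n : ℕ => |ω n| * Real.exp (-(2 ^ n) * γ)) atTop
          (nhds (|Real.tan θ| / Real.sqrt 2)) := by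
  obtain ⟨n₀, hn₀⟩ := hE
  -- bounds from Σ_II
  have hXb : ∀ k, n₀ ≤ k → 2 < |X lam E k| := by
    intro k hk
    have := (hn₀ k hk).2
    rwa [t_odd] at this
  have hYb2 : ∀ k, n₀ ≤ k → |Y lam E k| ≤ 2 := by
    intro k hk
    have := (hn₀ (k+1) (by omega)).1
    rwa [show 2*(k+1) = 2*k+2 by omega, t_even] at this
  set N : ℕ := n₀ + 1 with hN
  have hXneg : ∀ k, N ≤ k → X lam E k < -2 := by
    intro k hk
    obtain ⟨j, rfl⟩ : ∃ j, k = j + 1 := ⟨k - 1, by omega⟩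
    have h2 : 2 < |X lam E (j+1)| := hXb (j+1) (by omega)
    have h3 : Y lam E j ≤ 2 := (abs_le.1 (hYb2 j (by omega))).2
    have h4 : X lam E (j+1) ≤ 2 := by
      rw [X_succ]
      nlinarith [sq_nonneg (X lam E j)]
    rcases lt_abs.1 h2 with h | h
    · linarith
    · linarith
  have hYb1 : ∀ k, N ≤ k → |Y lam E k| ≤ 1 := by
    intro k hk
    have he : (Y lam E k)^2 * (2 - X lam E (k+1)) = 2 - Y lam E (k+1) := by
      linear_combination Y_succ lam E k
    have h1 := abs_le.1 (hYb2 (k+1) (by omega))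
    have h2 : X lam E (k+1) < -2 := hXneg (k+1) (by omega)
    have hsq : (Y lam E k)^2 ≤ 1 := by nlinarith [sq_nonneg (Y lam E k)]
    exact abs_le.2 ⟨by nlinarith [sq_nonneg (Y lam E k + 1)],
      by nlinarith [sq_nonneg (Y lam E k - 1)]⟩
  -- apply the core lemma to the shifted sequences
  obtain ⟨g, hgpos, hA0, hXinf0, hY00⟩ :=
    core (fun k => X lam E (k + N)) (fun k => Y lam E (k + N))
      (fun k => show X lam E (k+1+N) =
          (X lam E (k+N))^2 * (Y lam E (k+N) - 2) + 2 by
        rw [show k+1+N = (k+N)+1 by omega]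
        exact X_succ lam E (k+N))
      (fun k => show Y lam E (k+1+N) =
          (Y lam E (k+N))^2 * (X lam E (k+1+N) - 2) + 2 by
        rw [show k+1+N = (k+N)+1 by omega]
        exact Y_succ lam E (k+N))
      (fun k => hXneg (k+N) (by omega))
      (fun k => hYb1 (k+N) (by omega))
  have hY0 : Tendsto (Y lam E) atTop (nhds 0) := (tendsto_add_atTop_iff_nat N).1 hY00
  have hXinf : Tendsto (fun k => |X lam E k|) atTop atTop :=
    (tendsto_add_atTop_iff_nat N).1 hXinf0
  obtain ⟨γ', hγ'pos, hgeq⟩ : ∃ γ' : ℝ, 0 < γ' ∧ g = 2^N * γ' :=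
    ⟨g / 2^N, div_pos hgpos (by positivity), by field_simp⟩
  have hA' : Tendsto (fun k => 2 * |X lam E k| * Real.exp (-(2^k) * γ')) atTop (nhds 1) := by
    apply (tendsto_add_atTop_iff_nat N).1
    refine hA0.congr fun k => ?_
    congr 2
    rw [pow_add, hgeq]
    ring
  have Lim1 : Tendsto (fun k => |X lam E k| * Real.exp (-(2^k) * γ')) atTop (nhds (1/2)) := by
    have := hA'.div_const 2
    refine this.congr fun k => by ring
  have hexp0 : Tendsto (fun k => Real.exp (-(2^k) * γ')) atTop (nhds 0) := by
    have h1 : Tendsto (fun k : ℕ => (2:ℝ)^k * γ') atTop atTop :=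
      (tendsto_pow_atTop_atTop_of_one_lt (by norm_num : (1:ℝ) < 2)).atTop_mul_const hγ'pos
    have h2 : Tendsto (fun k : ℕ => -((2:ℝ)^k * γ')) atTop atBot := tendsto_neg_atTop_atBot.comp h1
    have := Real.tendsto_exp_atBot.comp h2
    refine this.congr fun k => by simp
  -- μ, ν, ω in terms of entries
  have hμval : ∀ n : ℕ, μ (n+1) = q lam E n + r lam E n := by
    intro n
    have h := hμ (n+1) (by omega)
    rw [show 2*(n+1)-1 = 2*n+1 by omega, etaA lam E n, (structB lam E n).1] at h
    have h01 := congrFun (congrFun h 0) 1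
    simp [U] at h01
    linarith
  have hνval : ∀ n : ℕ, ν (n+1) = (q lam E n)^2 - (r lam E n)^2 := by
    intro n
    have h := hνω (n+1) (by omega)
    rw [show 2*(n+1) = 2*n+2 by omega, even_A, even_B] at h
    have h00 := congrFun (congrFun h 0) 0
    simp [V, W] at h00
    linarith
  have hωval : ∀ n : ℕ, ω (n+1) = (q lam E n + r lam E n) * (s lam E n - p lam E n) := by
    intro n
    have h := hνω (n+1) (by omega)
    rw [show 2*(n+1) = 2*n+2 by omega, even_A, even_B] at h
    have h10 := congrFun (congrFun h 1) 0
    simp [V, W] at h10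
    linear_combination -h10
  -- the limit for |μ|
  have hexpsq0 : Tendsto (fun n => (Real.exp (-(2^n) * γ'))^2) atTop (nhds 0) := by
    have := hexp0.mul hexp0
    rw [mul_zero] at this
    refine this.congr fun n => by ring
  have hInner : Tendsto (fun n => (X lam E n)^2 * (Real.exp (-(2^n) * γ'))^2 -
      (Y lam E n + 2) * (Real.exp (-(2^n) * γ'))^2) atTop (nhds (1/4)) := by
    have part1 : Tendsto (fun n => (X lam E n)^2 * (Real.exp (-(2^n) * γ'))^2) atTop
        (nhds (1/4)) := by
      have := Lim1.mul Lim1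
      rw [show (1/2 : ℝ) * (1/2) = 1/4 by norm_num] at this
      refine this.congr fun n => ?_
      rw [← sq_abs (X lam E n)]
      ring
    have part2 : Tendsto (fun n => (Y lam E n + 2) * (Real.exp (-(2^n) * γ'))^2) atTop
        (nhds 0) := by
      have h1 : Tendsto (fun n => Y lam E n + 2) atTop (nhds 2) := by
        simpa using hY0.add_const 2
      have := h1.mul hexpsq0
      rwa [mul_zero] at this
    have := part1.sub part2
    rwa [sub_zero] at this
  have hT3 : Tendsto (fun n => |q lam E n + r lam E n| * Real.exp (-(2^n) * γ')) atTop
      (nhds (1/2)) := by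
    have hs := hInner.sqrt
    rw [show Real.sqrt (1/4) = 1/2 by
      rw [show (1/4:ℝ) = (1/2)^2 by norm_num, Real.sqrt_sq (by norm_num)]] at hs
    refine hs.congr fun n => ?_
    have key : (X lam E n)^2 * (Real.exp (-(2^n) * γ'))^2 -
        (Y lam E n + 2) * (Real.exp (-(2^n) * γ'))^2 =
        (|q lam E n + r lam E n| * Real.exp (-(2^n) * γ'))^2 := by
      rw [mul_pow, sq_abs]
      linear_combination (Real.exp (-(2^n) * γ'))^2 * (muSq lam E n).symm
    rw [key, Real.sqrt_sq (by positivity)]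
  -- the limit for |t (2n)|
  have hT2 : Tendsto (fun n => |Y lam E n| * Real.exp ((2^n) * γ')) atTop (nhds 2) := by
    have hD : Tendsto (fun n => (2 - X lam E (n+1)) * Real.exp (-(2^(n+1)) * γ')) atTop
        (nhds (1/2)) := by
      have e1 : Tendsto (fun n => 2 * Real.exp (-(2^(n+1)) * γ')) atTop (nhds 0) := by
        have := ((tendsto_add_atTop_iff_nat 1).2 hexp0).const_mul 2
        rwa [mul_zero] at this
      have e2 : Tendsto (fun n => |X lam E (n+1)| * Real.exp (-(2^(n+1)) * γ')) atTop
          (nhds (1/2)) := (tendsto_add_atTop_iff_nat 1).2 Lim1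
      have := e1.add e2
      rw [zero_add] at this
      refine this.congr' ?_
      filter_upwards [eventually_atTop.2 ⟨N, fun n (hn : N ≤ n) => hn⟩] with n hn
      have hneg : X lam E (n+1) < -2 := hXneg (n+1) (by omega)
      rw [abs_of_neg (by linarith : X lam E (n+1) < 0)]
      ring
    have hNum : Tendsto (fun n => 2 - Y lam E (n+1)) atTop (nhds 2) := by
      have := (tendsto_const_nhds (x := (2:ℝ)) (f := atTop)).sub
        ((tendsto_add_atTop_iff_nat 1).2 hY0)
      rwa [sub_zero] at this
    have hQ : Tendsto (fun n => (2 - Y lam E (n+1)) /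
        ((2 - X lam E (n+1)) * Real.exp (-(2^(n+1)) * γ'))) atTop (nhds 4) := by
      have := hNum.div hD (by norm_num)
      rwa [show (2:ℝ)/(1/2) = 4 by norm_num] at this
    have hs := hQ.sqrt
    rw [show Real.sqrt 4 = 2 by
      rw [show (4:ℝ) = 2^2 by norm_num, Real.sqrt_sq (by norm_num)]] at hs
    refine hs.congr' ?_
    filter_upwards [eventually_atTop.2 ⟨N, fun n (hn : N ≤ n) => hn⟩] with n hn
    have hneg : X lam E (n+1) < -2 := hXneg (n+1) (by omega)
    have hden : (0:ℝ) < 2 - X lam E (n+1) := by linarith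
    have hYsq : (Y lam E n)^2 * (2 - X lam E (n+1)) = 2 - Y lam E (n+1) := by
      linear_combination Y_succ lam E n
    have hE2 : Real.exp (-(2^(n+1)) * γ') =
        (Real.exp ((2^n) * γ') * Real.exp ((2^n) * γ'))⁻¹ := by
      rw [← Real.exp_add, ← Real.exp_neg]
      congr 1
      rw [pow_succ]
      ring
    have key : (2 - Y lam E (n+1)) / ((2 - X lam E (n+1)) * Real.exp (-(2^(n+1)) * γ')) =
        (|Y lam E n| * Real.exp ((2^n) * γ'))^2 := by
      rw [hE2, mul_pow, sq_abs, ← hYsq]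
      rw [div_eq_iff (mul_ne_zero (ne_of_gt hden)
        (inv_ne_zero (by positivity : Real.exp ((2^n) * γ') * Real.exp ((2^n) * γ') ≠ 0)))]
      field_simp
    rw [key, Real.sqrt_sq (by positivity)]
  -- E ≠ 0
  have hF0 : q lam E 0 - r lam E 0 = -(2*E) := q0 lam E
  have hEne : E ≠ 0 := by
    intro h0
    have hFz : ∀ k, q lam E k - r lam E k = 0 := by
      intro k
      induction k with
      | zero => rw [hF0, h0]; ring
      | succ k ih => rw [F_succ, ih, mul_zero]
    have hY2 : ∀ k, 2 ≤ Y lam E k := by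
      intro k
      have h1 := FGsq lam E k
      rw [hFz k] at h1
      nlinarith [sq_nonneg (p lam E k - s lam E k)]
    have := (hY0.eventually_lt_const (by norm_num : (0:ℝ) < 2)).exists
    obtain ⟨k, hk⟩ := this
    linarith [hY2 k]
  -- conclusion
  refine ⟨γ'/2, by positivity, ?_⟩
  intro θ hθ hsin
  have hcos : 0 < Real.cos θ := Real.cos_pos_of_mem_Ioo hθ
  have h2E : (2*E) ≠ 0 := by
    intro h
    exact hEne (by linarith [h] : E = 0)
  have hsin2 : Real.sin θ * (2*E) = E^2 - lam^2 := by
    rw [hsin]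
    field_simp
  have hGFval : ∀ k, p lam E k - s lam E k = -Real.sin θ * (q lam E k - r lam E k) := by
    intro k
    apply mul_right_cancel₀ h2E
    linear_combination (structB lam E k).2.2 + (q lam E k - r lam E k) * hsin2
  have hFsq : ∀ k, (q lam E k - r lam E k)^2 * (Real.cos θ)^2 = 2 - Y lam E k := by
    intro k
    linear_combination (FGsq lam E k) + (q lam E k - r lam E k)^2 * (Real.sin_sq_add_cos_sq θ)
      + ((p lam E k - s lam E k) - Real.sin θ * (q lam E k - r lam E k)) * (hGFval k)
  have hYle : ∀ k, 0 ≤ 2 - Y lam E k := by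
    intro k
    rw [← hFsq k]
    positivity
  have hFabs : ∀ k, |q lam E k - r lam E k| = Real.sqrt (2 - Y lam E k) / Real.cos θ := by
    intro k
    rw [← hFsq k, Real.sqrt_mul (sq_nonneg _), Real.sqrt_sq_eq_abs, Real.sqrt_sq hcos.le,
      mul_div_assoc, div_self (ne_of_gt hcos), mul_one]
  have hFlim : Tendsto (fun n => |q lam E n - r lam E n|) atTop
      (nhds (Real.sqrt 2 / Real.cos θ)) := by
    have h1 : Tendsto (fun n => 2 - Y lam E n) atTop (nhds 2) := by
      have := (tendsto_const_nhds (x := (2:ℝ)) (f := atTop)).sub hY0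
      rwa [sub_zero] at this
    have := (h1.sqrt).div_const (Real.cos θ)
    refine this.congr fun n => (hFabs n).symm
  have hGlim : Tendsto (fun n => |p lam E n - s lam E n|) atTop
      (nhds (|Real.sin θ| * (Real.sqrt 2 / Real.cos θ))) := by
    have := hFlim.const_mul |Real.sin θ|
    refine this.congr fun n => ?_
    rw [hGFval n, abs_mul, abs_neg]
  have hs2 : Real.sqrt 2 * Real.sqrt 2 = 2 := Real.mul_self_sqrt (by norm_num)
  have hs2pos : (0:ℝ) < Real.sqrt 2 := by positivity
  refine ⟨?_, ?_, ?_, ?_, ?_⟩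
  -- T1
  · apply (tendsto_add_atTop_iff_nat 1).1
    refine Lim1.congr fun n => ?_
    rw [show 2*(n+1)-1 = 2*n+1 by omega, t_odd]
    congr 2
    rw [pow_succ]
    ring
  -- T2
  · apply (tendsto_add_atTop_iff_nat 1).1
    refine hT2.congr fun n => ?_
    rw [show 2*(n+1) = 2*n+2 by omega, t_even]
    congr 2
    rw [pow_succ]
    ring
  -- T3
  · apply (tendsto_add_atTop_iff_nat 1).1
    refine hT3.congr fun n => ?_
    rw [hμval n]
    congr 2
    rw [pow_succ]
    ring
  -- T4
  · apply (tendsto_add_atTop_iff_nat 1).1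
    have hprod := hT3.mul hFlim
    have hval : (1/2 : ℝ) * (Real.sqrt 2 / Real.cos θ) = (Real.cos θ)⁻¹ / Real.sqrt 2 := by
      field_simp
      linear_combination hs2
    rw [hval] at hprod
    refine hprod.congr fun n => ?_
    rw [hνval n]
    rw [show (q lam E n)^2 - (r lam E n)^2
      = (q lam E n + r lam E n) * (q lam E n - r lam E n) by ring, abs_mul]
    rw [show (2:ℝ)^(n+1) = 2^n * 2 by rw [pow_succ]]
    rw [show -(2^n * 2 : ℝ) * (γ'/2) = -(2^n) * γ' by ring]
    ring
  -- T5
  · apply (tendsto_add_atTop_iff_nat 1).1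
    have hprod := hT3.mul hGlim
    have hval : (1/2 : ℝ) * (|Real.sin θ| * (Real.sqrt 2 / Real.cos θ))
        = |Real.tan θ| / Real.sqrt 2 := by
      rw [Real.tan_eq_sin_div_cos, abs_div, abs_of_pos hcos]
      field_simp
      linear_combination |Real.sin θ| * hs2
    rw [hval] at hprod
    refine hprod.congr fun n => ?_
    rw [hωval n]
    rw [abs_mul, show |s lam E n - p lam E n| = |p lam E n - s lam E n| from abs_sub_comm _ _]
    rw [show (2:ℝ)^(n+1) = 2^n * 2 by rw [pow_succ]]
    rw [show -(2^n * 2 : ℝ) * (γ'/2) = -(2^n) * γ' by ring]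
    ring


end TMH
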